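/- Let p be an odd prime, n = (p-1)/2, and let A be any (n+1)×(n+1) matrix with entries A[i][j] = f(j-i) for 0 ≤ i,j ≤ n, where f: ℤ → ℂ is an odd function (f(-k) = -f(k)) that is periodic mod p. If p ≡ 3 (mod 4), then for all 0 ≤ k,l ≤ n the minors satisfy M_{n-k,n-l} = -M_{k,l}, where M_{i,j} is the determinant of the submatrix of A obtained by deleting row i and column j. -/

import Mathlib

open Matrix

theorem minor_antisymm (p : ℕ) (hp : p.Prime) (hp3 : p % 4 = 3)
    (f : ℤ → ℂ) (hodd : ∀ k, f (-k) = -f k) (hper : ∀ k, f (k + p) = f k) :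
    let n := (p - 1) / 2
    let A : Matrix (Fin (n + 1)) (Fin (n + 1)) ℂ :=
      Matrix.of fun i j => f ((j : ℤ) - (i : ℤ))
    ∀ k l : Fin (n + 1),
      (A.submatrix k.rev.succAbove l.rev.succAbove).det =
        -(A.submatrix k.succAbove l.succAbove).det := by
  intro n A k l
  have hA : ∀ a b : Fin (n + 1), A a.rev b.rev = -A a b := by
    intro a b
    have ha : ((a.rev : ℕ) : ℤ) = n - a := by
      rw [Fin.val_rev]
      have := a.is_le
      push_cast [Nat.sub_sub]
      omega
    have hb : ((b.rev : ℕ) : ℤ) = n - b := by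
      rw [Fin.val_rev]
      have := b.is_le
      push_cast [Nat.sub_sub]
      omega
    show f _ = -f _
    rw [ha, hb]
    rw [show (↑n - (b:ℤ)) - (↑n - (a:ℤ)) = -((b:ℤ) - a) by ring, hodd]
  have key : (A.submatrix k.rev.succAbove l.rev.succAbove) =
      (-(A.submatrix k.succAbove l.succAbove)).submatrix Fin.rev Fin.rev := by
    ext i j
    simp only [submatrix_apply, neg_apply]
    rw [Fin.succAbove_rev_left, Fin.succAbove_rev_left, hA]
    rfl
  have hnodd : Odd n := by
    have : n = (p - 1) / 2 := rfl
    have hp3' : 3 ≤ p := by omega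
    refine Nat.odd_iff.mpr ?_
    omega
  have hcoe : (Fin.rev : Fin n → Fin n) = ⇑(Fin.revPerm : Equiv.Perm (Fin n)) := rfl
  rw [key, hcoe, Matrix.det_submatrix_equiv_self, Matrix.det_neg]
  simp [Fintype.card_fin, hnodd.neg_one_pow]
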